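/- Let A ∈ ℂ^{n×n} and denote by a_k the k-th row of A. Then det(A) = D_{1,n}(a_1) · D_{2,n}(a_2) · ⋯ · D_{n,n}(a_n), where each D_{k,n}(a_k) is a C(n,k−1) × C(n,k) matrix defined by the recursion given in the context (in particular the product of these matrices is a 1×1 matrix, i.e. a scalar). -/

import Mathlib

open Matrix

/-- The matrices `D_{k,n}(a) ∈ ℂ^{C(n,k-1) × C(n,k)}` of Jurkat–Ryser, defined
recursively: `D_{1,n}(a)` is the row vector `[a 1, …, a n]`; `D_{n,n}(a)` is the column
vector `[a n, -a (n-1), …, (-1)^(n-1) • a 1]ᵀ`; and for `2 ≤ k ≤ n - 1`,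
`D_{k,n}(a)` is the block matrix
`[[D_{k-1,n-1}(a 2, …, a n), 0], [(-1)^(k-1) a 1 • I, D_{k,n-1}(a 2, …, a n)]]`.
(Values outside `1 ≤ k ≤ n` are junk.) -/
noncomputable def D : (n : ℕ) → (k : ℕ) → (Fin n → ℂ) →
    Matrix (Fin (n.choose (k - 1))) (Fin (n.choose k)) ℂ
  | 0, _, _ => 0
  | _ + 1, 0, _ => 0
  | n + 1, 1, a =>
      Matrix.of fun _ (j : Fin ((n + 1).choose 1)) =>
        a (Fin.cast (Nat.choose_one_right (n + 1)) j)
  | n + 1, k + 2, a =>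
      if h : k + 2 = n + 1 then
        Matrix.of fun (i : Fin ((n + 1).choose (k + 1))) _ =>
          (-1 : ℂ) ^ (i : ℕ) *
            a (Fin.rev (Fin.cast
              (show (n + 1).choose (k + 1) = n + 1 by
                have hkn : k + 1 = n := by omega
                rw [hkn]; exact Nat.choose_succ_self_right n) i))
      else if h2 : k + 2 ≤ n then
        Matrix.reindex
          (finSumFinEquiv.trans (finCongr (Nat.choose_succ_succ n k).symm))
          (finSumFinEquiv.trans (finCongr (Nat.choose_succ_succ n (k + 1)).symm))
          (Matrix.fromBlocks
            (D n (k + 1) (a ∘ Fin.succ))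
            (0 : Matrix (Fin (n.choose k)) (Fin (n.choose (k + 2))) ℂ)
            (((-1 : ℂ) ^ (k + 1) * a 0) •
              (1 : Matrix (Fin (n.choose (k + 1))) (Fin (n.choose (k + 1))) ℂ))
            (D n (k + 2) (a ∘ Fin.succ)))
      else 0

/-- The chain product `D_{1,n}(v 0) * D_{2,n}(v 1) * ⋯ * D_{k,n}(v (k-1))`, a
`C(n,0) × C(n,k)` matrix. -/
noncomputable def DChain (n : ℕ) (v : ℕ → Fin n → ℂ) :
    (k : ℕ) → Matrix (Fin (n.choose 0)) (Fin (n.choose k)) ℂ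
  | 0 => 1
  | k + 1 => DChain n v k *
      Matrix.reindex (finCongr (congrArg n.choose (Nat.succ_sub_one k))) (Equiv.refl _)
        (D n (k + 1) (v k))


/-- delete index `j` from a sequence -/
def delv {α : Type*} (v : ℕ → α) (j : ℕ) : ℕ → α := fun t => if t < j then v t else v (t+1)

/-- tail in the `Fin` direction -/
def vtl {n : ℕ} (v : ℕ → Fin (n+1) → ℂ) : ℕ → Fin n → ℂ := fun i => v i ∘ Fin.succ

lemma finChooseZero_eq {n : ℕ} (p q : Fin (n.choose 0)) : p = q := by
  have h1 : n.choose 0 = 1 := Nat.choose_zero_right n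
  have := p.isLt; have := q.isLt
  exact Fin.ext (by omega)

/-- block index equivalence -/
def eqv (n m : ℕ) : Fin (n.choose m) ⊕ Fin (n.choose (m+1)) ≃ Fin ((n+1).choose (m+1)) :=
  finSumFinEquiv.trans (finCongr (Nat.choose_succ_succ n m).symm)

lemma eqv_inl_val (n m : ℕ) (i : Fin (n.choose m)) : (eqv n m (Sum.inl i) : ℕ) = i.val := rfl

lemma eqv_inr_val (n m : ℕ) (i : Fin (n.choose (m+1))) :
    (eqv n m (Sum.inr i) : ℕ) = n.choose m + i.val := rfl

lemma DChain_succ_apply (n : ℕ) (v : ℕ → Fin n → ℂ) (k : ℕ) (p : Fin (n.choose 0))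
    (q : Fin (n.choose (k+1))) :
    DChain n v (k+1) p q = ∑ r, DChain n v k p r * D n (k+1) (v k) r q := by
  rw [DChain, Matrix.mul_apply]; rfl

lemma DChain_zero_apply (n : ℕ) (v : ℕ → Fin n → ℂ) (p q : Fin (n.choose 0)) :
    DChain n v 0 p q = 1 := by
  rw [DChain, Matrix.one_apply, if_pos (finChooseZero_eq p q)]

lemma DChain_congr (n : ℕ) (v w : ℕ → Fin n → ℂ) (k : ℕ) (h : ∀ i < k, v i = w i) :
    DChain n v k = DChain n w k := by
  induction k with
  | zero => rfl
  | succ k ih =>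
      ext p q
      rw [DChain_succ_apply, DChain_succ_apply, ih (fun i hi => h i (by omega)),
        h k (by omega)]

lemma D_one_apply (n : ℕ) (a : Fin (n+1) → ℂ) (p : Fin ((n+1).choose 0))
    (q : Fin ((n+1).choose 1)) (h : q.val < n+1) :
    D (n+1) 1 a p q = a ⟨q.val, h⟩ := rfl

lemma D_block_apply (n k : ℕ) (h : k + 2 ≤ n) (a : Fin (n+1) → ℂ)
    (s : Fin (n.choose k) ⊕ Fin (n.choose (k+1))) (t : Fin (n.choose (k+1)) ⊕ Fin (n.choose (k+2))) :
    D (n+1) (k+2) a (eqv n k s) (eqv n (k+1) t) =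
      Matrix.fromBlocks (D n (k+1) (a ∘ Fin.succ))
        (0 : Matrix (Fin (n.choose k)) (Fin (n.choose (k + 2))) ℂ)
        (((-1 : ℂ) ^ (k + 1) * a 0) •
          (1 : Matrix (Fin (n.choose (k + 1))) (Fin (n.choose (k + 1))) ℂ))
        (D n (k+2) (a ∘ Fin.succ)) s t := by
  rw [D, dif_neg (by omega), dif_pos h]
  simp [eqv, Matrix.reindex_apply]

lemma D_last_apply (n : ℕ) (a : Fin (n+2) → ℂ) (i : Fin ((n+2).choose (n+2-1)))
    (q : Fin ((n+2).choose (n+2))) (h : i.val < n+2) :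
    D (n+2) (n+2) a i q = (-1 : ℂ) ^ (i : ℕ) * a ⟨n+1-i.val, by omega⟩ := by
  rw [D, dif_pos rfl]
  simp only [Matrix.of_apply]
  congr 1
  apply congrArg
  apply Fin.ext
  simp [Fin.rev]

lemma sum_fin_one {c : ℕ} (hc : c = 1) {β : Type*} [AddCommMonoid β] (f : Fin c → β)
    (r0 : Fin c) : ∑ r, f r = f r0 := by
  letI : Unique (Fin c) := ⟨⟨r0⟩, fun x => Fin.ext (by have := x.isLt; have := r0.isLt; omega)⟩
  exact Fintype.sum_unique f

lemma D_diag_apply (n : ℕ) (a : Fin (n+1) → ℂ) (i : Fin ((n+1).choose ((n+1)-1)))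
    (q : Fin ((n+1).choose (n+1))) (h : i.val < n+1) :
    D (n+1) (n+1) a i q = (-1 : ℂ) ^ (i : ℕ) * a ⟨n - i.val, by omega⟩ := by
  match n with
  | 0 =>
      have hq : q.val < 1 := by have := q.isLt; simpa [Nat.choose_self] using this
      have hi : i.val = 0 := by omega
      rw [D_one_apply 0 a i q (by omega)]
      have h1 : (-1 : ℂ) ^ (i : ℕ) = 1 := by rw [hi]; norm_num
      rw [h1, one_mul]
      congr 1
      exact Fin.ext (by omega)
  | t + 1 => exact D_last_apply t a i q h

lemma split (n : ℕ) (v : ℕ → Fin (n+1) → ℂ) (m : ℕ) (hm : m + 1 ≤ n)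
    (p : Fin ((n+1).choose 0)) (p' : Fin (n.choose 0)) :
    (∀ i, DChain (n+1) v (m+1) p (eqv n m (Sum.inl i)) =
      ∑ j ∈ Finset.range (m+1), (-1 : ℂ)^j * v j 0 * DChain n (delv (vtl v) j) m p' i)
    ∧ (∀ i, DChain (n+1) v (m+1) p (eqv n m (Sum.inr i)) = DChain n (vtl v) (m+1) p' i) := by
  induction m with
  | zero =>
      obtain ⟨t, rfl⟩ : ∃ t, n = t + 1 := ⟨n - 1, by omega⟩
      constructor
      · intro i
        rw [DChain_succ_apply, sum_fin_one (Nat.choose_zero_right (t+2)) _ p,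
          DChain_zero_apply, one_mul, Finset.sum_range_one,
          DChain_zero_apply, D_one_apply (t+1) (v 0) p _ (by
            have := (eqv (t+1) 0 (Sum.inl i)).isLt
            simpa [Nat.choose_one_right] using this)]
        have hi : i.val = 0 := by
          have := i.isLt
          have h1 : (t+1).choose 0 = 1 := Nat.choose_zero_right _
          omega
        have hval : (eqv (t+1) 0 (Sum.inl i)).val = 0 := by rw [eqv_inl_val, hi]
        simp only [mul_one, pow_zero, one_mul]
        congr 1
        exact Fin.ext (by simp [hval])
      · intro i
        rw [DChain_succ_apply, sum_fin_one (Nat.choose_zero_right (t+2)) _ p,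
          DChain_zero_apply, one_mul,
          DChain_succ_apply, sum_fin_one (Nat.choose_zero_right (t+1)) _ p',
          DChain_zero_apply, one_mul]
        rw [D_one_apply (t+1) (v 0) p _ (by
            have := (eqv (t+1) 0 (Sum.inr i)).isLt
            simpa [Nat.choose_one_right] using this),
          D_one_apply t (vtl v 0) p' i (by
            have := i.isLt; simpa [Nat.choose_one_right] using this)]
        have hval : (eqv (t+1) 0 (Sum.inr i)).val = 1 + i.val := by
          rw [eqv_inr_val, Nat.choose_zero_right]
        simp only [vtl, Function.comp_apply]
        congr 1
        exact Fin.ext (by simp [hval, Fin.val_succ]; omega)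
  | succ m ih =>
      obtain ⟨ihl, ihr⟩ := ih (by omega)
      constructor
      · intro i
        rw [DChain_succ_apply,
          ← Equiv.sum_comp (eqv n m) (fun r => DChain (n+1) v (m+1) p r *
            D (n+1) (m+2) (v (m+1)) r (eqv n (m+1) (Sum.inl i))),
          Fintype.sum_sum_type]
        simp only [D_block_apply n m hm (v (m+1)), Matrix.fromBlocks_apply₁₁,
          Matrix.fromBlocks_apply₂₁, ihl, ihr, Matrix.smul_apply, Matrix.one_apply,
          smul_eq_mul]
        rw [Finset.sum_range_succ]
        congr 1
        · simp only [Finset.sum_mul]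
          rw [Finset.sum_comm]
          refine Finset.sum_congr rfl (fun j hj => ?_)
          have hj' : j < m + 1 := Finset.mem_range.mp hj
          have harg : delv (vtl v) j m = v (m+1) ∘ Fin.succ := by
            simp [delv, vtl, show ¬ m < j by omega]
          rw [DChain_succ_apply, harg, Finset.mul_sum]
          exact Finset.sum_congr rfl (fun x _ => by ring)
        · rw [Finset.sum_eq_single i (fun x _ hx => by simp [hx])
            (fun h => absurd (Finset.mem_univ i) h)]
          rw [if_pos rfl, mul_one,
            DChain_congr n (delv (vtl v) (m+1)) (vtl v) (m+1)
              (fun t ht => by simp [delv, ht])]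
          ring
      · intro i
        rw [DChain_succ_apply,
          ← Equiv.sum_comp (eqv n m) (fun r => DChain (n+1) v (m+1) p r *
            D (n+1) (m+2) (v (m+1)) r (eqv n (m+1) (Sum.inr i))),
          Fintype.sum_sum_type]
        simp only [D_block_apply n m hm (v (m+1)), Matrix.fromBlocks_apply₁₂,
          Matrix.fromBlocks_apply₂₂, ihl, ihr, Matrix.zero_apply, mul_zero,
          Finset.sum_const_zero, zero_add]
        rw [DChain_succ_apply]
        rfl

lemma delv_eq_submatrix (n : ℕ) (v : ℕ → Fin (n+1) → ℂ) (j : ℕ) (hj : j < n+1) :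
    (Matrix.of fun (r c : Fin n) => delv (vtl v) j r c) =
      (Matrix.of fun (i j : Fin (n+1)) => v i j).submatrix
        (Fin.succAbove ⟨j, hj⟩) Fin.succ := by
  ext r c
  simp only [Matrix.of_apply, Matrix.submatrix_apply, delv, vtl, Function.comp_apply,
    Fin.succAbove]
  by_cases h : (r : ℕ) < j
  · rw [if_pos h, if_pos (by simpa [Fin.lt_def] using h)]
    rfl
  · rw [if_neg h, if_neg (by simpa [Fin.lt_def] using h)]
    rfl

lemma det_col_expand (n : ℕ) (v : ℕ → Fin (n+1) → ℂ) :
    (Matrix.of fun (i j : Fin (n+1)) => v i j).det =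
      ∑ j ∈ Finset.range (n+1), (-1 : ℂ)^j * v j 0 *
        (Matrix.of fun (r c : Fin n) => delv (vtl v) j r c).det := by
  rw [Matrix.det_succ_column_zero, ← Fin.sum_univ_eq_sum_range (fun j =>
    (-1 : ℂ)^j * v j 0 * (Matrix.of fun (r c : Fin n) => delv (vtl v) j r c).det)]
  refine Finset.sum_congr rfl (fun x _ => ?_)
  rw [delv_eq_submatrix n v x.val x.isLt]
  congr

lemma D_diag_apply' (n : ℕ) (a : Fin (n+1) → ℂ) (i : Fin ((n+1).choose ((n+1)-1)))
    (q : Fin ((n+1).choose (n+1))) (w : ℕ) (hw : i.val = w) (h : w < n+1) :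
    D (n+1) (n+1) a i q = (-1 : ℂ) ^ w * a ⟨n - w, by omega⟩ := by
  subst hw
  exact D_diag_apply n a i q h

lemma dchain_det : ∀ (n : ℕ) (v : ℕ → Fin n → ℂ) (p : Fin (n.choose 0)) (q : Fin (n.choose n)),
    DChain n v n p q = (Matrix.of fun (i j : Fin n) => v i j).det := by
  intro n
  induction n with
  | zero =>
      intro v p q
      rw [Matrix.det_fin_zero, DChain_zero_apply]
  | succ n ih =>
      match n, ih with
      | 0, _ =>
          intro v p q
          have hq : q.val < 1 := by
            have := q.isLt
            have h1 : (0+1).choose (0+1) = 1 := rfl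
            omega
          rw [DChain_succ_apply, sum_fin_one (Nat.choose_zero_right 1) _ p,
            DChain_zero_apply, one_mul, D_one_apply 0 (v 0) p q (by omega),
            Matrix.det_fin_one]
          simp only [Matrix.of_apply]
          have h0 : ((0 : Fin 1) : ℕ) = 0 := rfl
          rw [h0]
          congr 1
          exact Fin.ext (by simp only [Fin.val_zero]; omega)
      | t + 1, ih =>
          intro v p q
          have hp' : 0 < (t+1).choose 0 := by rw [Nat.choose_zero_right]; omega
          have hq' : 0 < (t+1).choose (t+1) := by rw [Nat.choose_self]; omega
          set p' : Fin ((t+1).choose 0) := ⟨0, hp'⟩ with hp'def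
          set q' : Fin ((t+1).choose (t+1)) := ⟨0, hq'⟩ with hq'def
          have hcst : (t+1).choose t = t+1 := Nat.choose_succ_self_right t
          obtain ⟨hl, hr⟩ := split (t+1) v t (by omega) p p'
          rw [DChain_succ_apply,
            ← Equiv.sum_comp (eqv (t+1) t) (fun r => DChain (t+2) v (t+1) p r *
              D (t+2) (t+2) (v (t+1)) r q),
            Fintype.sum_sum_type]
          simp only [hl, hr]
          rw [det_col_expand (t+1) v, Finset.sum_range_succ]
          congr 1
          · -- inl part
            simp only [Finset.sum_mul]
            rw [Finset.sum_comm]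
            refine Finset.sum_congr rfl (fun j hj => ?_)
            have hj' : j < t + 1 := Finset.mem_range.mp hj
            have harg : delv (vtl v) j t = v (t+1) ∘ Fin.succ := by
              simp [delv, vtl, show ¬ t < j by omega]
            rw [← ih (delv (vtl v) j) p' q', DChain_succ_apply, Finset.mul_sum]
            refine Finset.sum_congr rfl (fun s _ => ?_)
            have hs : s.val < t + 1 := by have := s.isLt; omega
            rw [D_diag_apply' (t+1) (v (t+1)) _ q s.val (eqv_inl_val _ _ s) (by omega),
              D_diag_apply' t (delv (vtl v) j t) s q' s.val rfl (by omega), harg]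
            have hv : v (t+1) ⟨t + 1 - s.val, by omega⟩ =
                (v (t+1) ∘ Fin.succ) ⟨t - s.val, by omega⟩ := by
              simp only [Function.comp_apply]
              congr 1
              exact Fin.ext (by simp [Fin.val_succ]; omega)
            rw [hv]
            ring
          · -- inr part
            rw [sum_fin_one (Nat.choose_self (t+1)) _ q',
              D_diag_apply' (t+1) (v (t+1)) _ q (t+1)
                (by rw [eqv_inr_val]; simp [hq'def, hcst]) (by omega),
              ih (vtl v) p' q']
            have hm : (Matrix.of fun (i j : Fin (t+1)) => vtl v i j) =
                (Matrix.of fun (r c : Fin (t+1)) => delv (vtl v) (t+1) r c) := by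
              ext r c
              simp [delv, r.isLt, Nat.le_of_lt_succ r.isLt]
            rw [hm]
            have hv : v (t+1) ⟨t + 1 - (t+1), by omega⟩ = v (t+1) 0 := by
              congr 1
              exact Fin.ext (by simp)
            rw [hv]
            ring

theorem det_eq_D_chain_entry (n : ℕ) (A : Matrix (Fin n) (Fin n) ℂ)
    (p : Fin (n.choose 0)) (q : Fin (n.choose n)) :
    DChain n (fun k j => if h : k < n then A ⟨k, h⟩ j else 0) n p q = A.det := by
  rw [dchain_det]
  congr 1
  ext i j
  simp [i.isLt]
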